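/- arXiv:1608.01528 — 2 statements merged into one kernel-verified Lean document; each statement's English description precedes it below -/
import Mathlib

section
/- For N ≥ 2, an N-partite correlation P is causal if and only if it can be decomposed as P(a|x) = Σ_K q_K · P_K(a_K|x_K) · P_{K,x_K,a_K}(a_{N∖K}|x_{N∖K}), where the sum runs over all nonempty strict subsets K of {1,…,N}, with q_K ≥ 0 such that Σ_K q_K = 1, where each P_K(a_K|x_K) is a causal |K|-partite correlation, and where for each (K, x_K, a_K), P_{K,x_K,a_K}(a_{N∖K}|x_{N∖K}) is a causal (N−|K|)-partite correlation. -/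
/-- A correlation for the parties in the finite set `S`, where party `i` has input set `X i`
and output set `A i`: a real number `P x a` for each assignment of inputs `x` and outputs `a`
for the parties in `S`. -/
def Corr {ι : Type} (X A : ι → Type) (S : Finset ι) : Type :=
  ((i : {j // j ∈ S}) → X i.1) → ((i : {j // j ∈ S}) → A i.1) → ℝ

/-- `p` is a probability distribution on the finite type `α`. -/
def IsProbDist {α : Type} [Fintype α] (p : α → ℝ) : Prop :=
  (∀ a, 0 ≤ p a) ∧ ∑ a, p a = 1

/-- Restriction of a tuple indexed by `S` to a subset `T ⊆ S`. -/
def restr {ι : Type} {X : ι → Type} {S T : Finset ι} (h : T ⊆ S)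
    (x : (i : {j // j ∈ S}) → X i.1) : (i : {j // j ∈ T}) → X i.1 :=
  fun i => x ⟨i.1, h i.2⟩

theorem erase_sub {ι : Type} [DecidableEq ι] (S : Finset ι) (k : ι) : S.erase k ⊆ S :=
  fun _ hi => Finset.mem_of_mem_erase hi

theorem sdiff_sub {ι : Type} [DecidableEq ι] (S K : Finset ι) : S \ K ⊆ S :=
  fun _ hi => (Finset.mem_sdiff.mp hi).1

/-- Combine a tuple on `K` and a tuple on `S \ K` into a tuple on `S`. -/
def glue {ι : Type} [DecidableEq ι] {X : ι → Type} {S K : Finset ι} (_ : K ⊆ S)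
    (u : (i : {j // j ∈ K}) → X i.1) (v : (i : {j // j ∈ S \ K}) → X i.1) :
    (i : {j // j ∈ S}) → X i.1 :=
  fun i => if h : i.1 ∈ K then u ⟨i.1, h⟩ else v ⟨i.1, Finset.mem_sdiff.mpr ⟨i.2, h⟩⟩

/-- Insert a value for party `k` into a tuple on `S.erase k`, giving a tuple on `S`. -/
def ins {ι : Type} [DecidableEq ι] {X : ι → Type} {S : Finset ι} {k : ι} (_ : k ∈ S)
    (xk : X k) (u : (i : {j // j ∈ S.erase k}) → X i.1) : (i : {j // j ∈ S}) → X i.1 :=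
  fun i => if h : i.1 = k then cast (congrArg X h.symm) xk
    else u ⟨i.1, Finset.mem_erase.mpr ⟨h, i.2⟩⟩

/-- Causal correlations, defined by induction on the number of parties: any single-party
probability distribution is causal; a correlation on a set `S` of at least two parties is
causal iff it is a convex combination, over choices of a party `k ∈ S` acting first, of
products of a single-party distribution for `k` with causal correlations for the remaining
parties `S.erase k` that may depend on the input and output of party `k`. -/
inductive IsCausal {ι : Type} [DecidableEq ι] (X A : ι → Type) [∀ i, Fintype (A i)] :
    (S : Finset ι) → Corr X A S → Prop
  | base (k : ι) (P : Corr X A {k}) (hP : ∀ x, IsProbDist (P x)) : IsCausal X A {k} P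
  | step (S : Finset ι) (hS : 2 ≤ S.card) (P : Corr X A S)
      (q : {j // j ∈ S} → ℝ)
      (Pfirst : (k : {j // j ∈ S}) → X k.1 → A k.1 → ℝ)
      (Prest : (k : {j // j ∈ S}) → X k.1 → A k.1 → Corr X A (S.erase k.1))
      (hq : ∀ k, 0 ≤ q k)
      (hq1 : ∑ k ∈ S.attach, q k = 1)
      (hPfirst : ∀ k xk, IsProbDist (Pfirst k xk))
      (hPrest : ∀ k xk ak, IsCausal X A (S.erase k.1) (Prest k xk ak))
      (hP : ∀ x a, P x a = ∑ k ∈ S.attach, q k * Pfirst k (x k) (a k) *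
            Prest k (x k) (a k) (restr (erase_sub S k.1) x) (restr (erase_sub S k.1) a)) :
      IsCausal X A S P
attribute [reducible] Corr
section Aux

variable {ι : Type} [DecidableEq ι] {X A : ι → Type} [∀ i, Fintype (A i)]

/-- Equivalence between tuples on a singleton and the single value. -/
def singTupleEquiv (B : ι → Type) (k : ι) :
    ((i : {j // j ∈ ({k} : Finset ι)}) → B i.1) ≃ B k where
  toFun f := f ⟨k, Finset.mem_singleton_self k⟩
  invFun b := fun i => cast (congrArg B (Finset.mem_singleton.mp i.2).symm) b
  left_inv f := by
    funext i
    obtain ⟨i1, hi⟩ := i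
    have h : i1 = k := Finset.mem_singleton.mp hi
    subst h
    rfl
  right_inv b := rfl

/-- Reindexing a correlation along an equality of finsets. -/
def reindex {T T' : Finset ι} (e : T = T') (P : Corr X A T) : Corr X A T' :=
  fun x a => P (fun i => x ⟨i.1, e ▸ i.2⟩) (fun i => a ⟨i.1, e ▸ i.2⟩)

theorem isCausal_reindex {T T' : Finset ι} (e : T = T') {P : Corr X A T}
    (h : IsCausal X A T P) : IsCausal X A T' (reindex e P) := by
  subst e; exact h

end Aux
section Aux2

variable {ι : Type} [DecidableEq ι] {X A : ι → Type} [∀ i, Fintype (A i)]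

/-- The uniform product correlation on `T`. -/
noncomputable def uCorr (X A : ι → Type) [∀ i, Fintype (A i)] (T : Finset ι) : Corr X A T :=
  fun _ _ => ∏ i ∈ T, ((Fintype.card (A i) : ℝ))⁻¹

theorem uCorr_probDist (T : Finset ι) (hA : ∀ i ∈ T, X i → Nonempty (A i))
    (x : (i : {j // j ∈ T}) → X i.1) : IsProbDist (uCorr X A T x) := by
  have hA' : ∀ i ∈ T, Nonempty (A i) := fun i hi => hA i hi (x ⟨i, hi⟩)
  constructor
  · intro a
    exact Finset.prod_nonneg fun i _ => by positivity
  · have hcard : (Fintype.card ((i : {j // j ∈ T}) → A i.1) : ℝ)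
        = ∏ i ∈ T, (Fintype.card (A i) : ℝ) := by
      rw [Fintype.card_pi]
      push_cast
      exact Finset.prod_coe_sort T (fun i => (Fintype.card (A i) : ℝ))
    simp only [uCorr]
    rw [Finset.sum_const, Finset.card_univ, nsmul_eq_mul, hcard, ← Finset.prod_mul_distrib]
    apply Finset.prod_eq_one
    intro i hi
    have : (0:ℝ) < Fintype.card (A i) := by
      have := hA' i hi
      exact_mod_cast Fintype.card_pos
    field_simp

theorem uCorr_causal (T : Finset ι) (hT : T.Nonempty)
    (hA : ∀ i ∈ T, X i → Nonempty (A i)) :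
    IsCausal X A T (uCorr X A T) := by
  induction T using Finset.strongInduction with
  | _ T IH =>
  rcases Nat.lt_or_ge T.card 2 with hc | hc
  · -- card = 1
    have h1 : T.card = 1 := le_antisymm (by omega) (Finset.card_pos.mpr hT)
    obtain ⟨k, hk⟩ := Finset.card_eq_one.mp h1
    subst hk
    exact IsCausal.base k _ (uCorr_probDist _ hA)
  · -- card ≥ 2
    obtain ⟨k, hk⟩ := hT
    refine IsCausal.step T hc (uCorr X A T)
      (fun k' => if k' = ⟨k, hk⟩ then 1 else 0)
      (fun k' _ b => ((Fintype.card (A k'.1) : ℝ))⁻¹)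
      (fun k' _ _ => uCorr X A (T.erase k'.1))
      (fun k' => by positivity)
      (by rw [Finset.sum_ite_eq']; simp [Finset.mem_attach])
      (fun k' xk' => ?_) (fun k' xk' ak' => ?_) (fun x a => ?_)
    · -- Pfirst prob dist
      constructor
      · intro b; positivity
      · have hpos : (0:ℝ) < Fintype.card (A k'.1) := by
          have := hA k'.1 k'.2 xk'
          exact_mod_cast Fintype.card_pos
        rw [Finset.sum_const, Finset.card_univ, nsmul_eq_mul]
        field_simp
    · -- Prest causal
      refine IH (T.erase k'.1) (Finset.erase_ssubset k'.2) ?_ ?_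
      · rw [← Finset.card_pos, Finset.card_erase_of_mem k'.2]; omega
      · intro i hi; exact hA i (Finset.mem_of_mem_erase hi)
    · -- decomposition equation
      simp only [ite_mul, zero_mul, one_mul]
      rw [Finset.sum_ite_eq' T.attach (⟨k, hk⟩ : {j // j ∈ T})]
      simp only [Finset.mem_attach, if_true, uCorr]
      exact (Finset.mul_prod_erase T _ hk).symm

end Aux2
section Aux3

variable {ι : Type} [DecidableEq ι] {X A : ι → Type} [∀ i, Fintype (A i)]

theorem IsProbDist.nonempty {α : Type} [Fintype α] {p : α → ℝ} (h : IsProbDist p) :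
    Nonempty α := by
  by_contra hne
  have : IsEmpty α := not_nonempty_iff.mp hne
  have := h.2
  rw [Finset.univ_eq_empty, Finset.sum_empty] at this
  norm_num at this

theorem isCausal_probDist_of_card_one {T : Finset ι} {P : Corr X A T}
    (h : IsCausal X A T P) (hT : T.card = 1) : ∀ x, IsProbDist (P x) := by
  cases h with
  | base k P hP => exact hP
  | step S hS P q Pfirst Prest hq hq1 hPfirst hPrest hP => omega

theorem isCausal_step_data {T : Finset ι} {P : Corr X A T}
    (h : IsCausal X A T P) (hT : 2 ≤ T.card) :
    ∃ (q : {j // j ∈ T} → ℝ)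
      (Pfirst : (k : {j // j ∈ T}) → X k.1 → A k.1 → ℝ)
      (Prest : (k : {j // j ∈ T}) → X k.1 → A k.1 → Corr X A (T.erase k.1)),
      (∀ k, 0 ≤ q k) ∧ (∑ k ∈ T.attach, q k = 1) ∧
      (∀ k xk, IsProbDist (Pfirst k xk)) ∧
      (∀ k xk ak, IsCausal X A (T.erase k.1) (Prest k xk ak)) ∧
      (∀ x a, P x a = ∑ k ∈ T.attach, q k * Pfirst k (x k) (a k) *
            Prest k (x k) (a k) (restr (erase_sub T k.1) x) (restr (erase_sub T k.1) a)) := by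
  cases h with
  | base k P hP => simp at hT
  | step S hS P q Pfirst Prest hq hq1 hPfirst hPrest hP =>
    exact ⟨q, Pfirst, Prest, hq, hq1, hPfirst, hPrest, hP⟩

theorem isCausal_hA {T : Finset ι} {P : Corr X A T} (h : IsCausal X A T P) :
    ∀ i ∈ T, X i → Nonempty (A i) := by
  induction h with
  | base k P hP =>
    intro i hi xi
    have hik : i = k := Finset.mem_singleton.mp hi
    subst hik
    have hpd := hP ((singTupleEquiv X i).symm xi)
    obtain ⟨a⟩ := hpd.nonempty
    exact ⟨singTupleEquiv A i a⟩
  | step S hS P q Pfirst Prest hq hq1 hPfirst hPrest hP IH =>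
    intro i hi xi
    exact (hPfirst ⟨i, hi⟩ xi).nonempty

end Aux3
section Aux4

variable {ι : Type} [DecidableEq ι] {X A : ι → Type} [∀ i, Fintype (A i)]

theorem convex_causal : ∀ (S : Finset ι), S.Nonempty →
    (∀ i ∈ S, X i → Nonempty (A i)) →
    ∀ {κ : Type} (T : Finset κ) (w : κ → ℝ) (Q : κ → Corr X A S),
    (∀ i ∈ T, 0 ≤ w i) → (∑ i ∈ T, w i = 1) → (∀ i ∈ T, IsCausal X A S (Q i)) →
    IsCausal X A S (fun x a => ∑ i ∈ T, w i * Q i x a) := by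
  intro S
  induction S using Finset.strongInduction with
  | _ S IH =>
  intro hSne hA κ T w Q hw hw1 hQ
  rcases Nat.lt_or_ge S.card 2 with hc | hc
  · -- singleton case
    have h1 : S.card = 1 := le_antisymm (by omega) (Finset.card_pos.mpr hSne)
    obtain ⟨k, rfl⟩ := Finset.card_eq_one.mp h1
    refine IsCausal.base k _ (fun x => ⟨fun a => ?_, ?_⟩)
    · exact Finset.sum_nonneg fun i hi => mul_nonneg (hw i hi)
        ((isCausal_probDist_of_card_one (hQ i hi) (Finset.card_singleton k) x).1 a)
    · rw [Finset.sum_comm]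
      rw [← hw1]
      refine Finset.sum_congr rfl fun i hi => ?_
      rw [← Finset.mul_sum, (isCausal_probDist_of_card_one (hQ i hi)
        (Finset.card_singleton k) x).2, mul_one]
  · -- card ≥ 2
    have hd := fun (i : {i // i ∈ T}) => isCausal_step_data (hQ i.1 i.2) hc
    choose q Pf Pr hq hq1 hPf hPr hP using hd
    set q'' : {j // j ∈ S} → ℝ := fun k => ∑ i ∈ T.attach, w i.1 * q i k with hq''def
    set D : (k : {j // j ∈ S}) → X k.1 → A k.1 → ℝ :=
      fun k xk ak => ∑ i ∈ T.attach, w i.1 * q i k * Pf i k xk ak with hDdef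
    have hq''nonneg : ∀ k, 0 ≤ q'' k := fun k =>
      Finset.sum_nonneg fun i _ => mul_nonneg (hw i.1 i.2) (hq i k)
    have hDnonneg : ∀ k xk ak, 0 ≤ D k xk ak := fun k xk ak =>
      Finset.sum_nonneg fun i _ => mul_nonneg (mul_nonneg (hw i.1 i.2) (hq i k))
        ((hPf i k xk).1 ak)
    refine IsCausal.step S hc _ q''
      (fun k xk ak => if q'' k = 0 then ((Fintype.card (A k.1) : ℝ))⁻¹
        else D k xk ak / q'' k)
      (fun k xk ak => if hD : D k xk ak = 0 then uCorr X A (S.erase k.1)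
        else (fun y b => ∑ i ∈ T.attach,
          (w i.1 * q i k * Pf i k xk ak / D k xk ak) * Pr i k xk ak y b))
      hq''nonneg ?_ (fun k xk => ⟨fun ak => ?_, ?_⟩) (fun k xk ak => ?_) (fun x a => ?_)
    · -- sum of q'' = 1
      rw [Finset.sum_comm, ← hw1, ← Finset.sum_attach T w]
      exact Finset.sum_congr rfl fun i _ => by rw [← Finset.mul_sum, hq1 i, mul_one]
    · -- Pfirst nonneg
      dsimp only
      split
      · positivity
      · exact div_nonneg (hDnonneg k xk ak) (hq''nonneg k)
    · -- Pfirst sums to 1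
      by_cases h0 : q'' k = 0
      · simp only [h0, if_true]
        have hpos : (0:ℝ) < Fintype.card (A k.1) := by
          have := hA k.1 k.2 xk
          exact_mod_cast Fintype.card_pos
        rw [Finset.sum_const, Finset.card_univ, nsmul_eq_mul]
        field_simp
      · simp only [h0, if_false]
        rw [← Finset.sum_div]
        rw [div_eq_one_iff_eq h0]
        rw [hq''def, hDdef]
        rw [Finset.sum_comm]
        refine Finset.sum_congr rfl fun i _ => ?_
        rw [← Finset.mul_sum, (hPf i k xk).2, mul_one]
    · -- Prest causal
      split
      · exact uCorr_causal _ (by rw [← Finset.card_pos, Finset.card_erase_of_mem k.2]; omega)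
          (fun i hi => hA i (Finset.mem_of_mem_erase hi))
      · next hD =>
        have hDpos : 0 < D k xk ak := lt_of_le_of_ne (hDnonneg k xk ak) (Ne.symm hD)
        refine IH (S.erase k.1) (Finset.erase_ssubset k.2)
          (by rw [← Finset.card_pos, Finset.card_erase_of_mem k.2]; omega)
          (fun i hi => hA i (Finset.mem_of_mem_erase hi))
          T.attach _ _ (fun i _ => div_nonneg (mul_nonneg (mul_nonneg (hw i.1 i.2)
            (hq i k)) ((hPf i k xk).1 ak)) (hDnonneg k xk ak)) ?_
          (fun i _ => hPr i k xk ak)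
        rw [← Finset.sum_div, div_eq_one_iff_eq hD, hDdef]
    · -- decomposition
      have hL : ∑ i ∈ T, w i * Q i x a = ∑ k ∈ S.attach, ∑ i ∈ T.attach,
          w i.1 * q i k * Pf i k (x k) (a k) *
            Pr i k (x k) (a k) (restr (erase_sub S k.1) x) (restr (erase_sub S k.1) a) := by
        rw [← Finset.sum_attach T (fun i => w i * Q i x a), Finset.sum_comm]
        refine Finset.sum_congr rfl fun i _ => ?_
        rw [hP i x a, Finset.mul_sum]
        exact Finset.sum_congr rfl fun k _ => by ring
      rw [hL]
      refine Finset.sum_congr rfl fun k _ => ?_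
      by_cases h0 : q'' k = 0
      · have hz : ∀ i ∈ T.attach, w i.1 * q i k = 0 := by
          intro i hi
          have := (Finset.sum_eq_zero_iff_of_nonneg
            (fun i _ => mul_nonneg (hw i.1 i.2) (hq i k))).mp h0
          exact this i hi
        rw [h0, zero_mul, zero_mul]
        refine Finset.sum_eq_zero fun i hi => ?_
        rw [hz i hi, zero_mul, zero_mul]
      · simp only [h0, if_false]
        by_cases hD0 : D k (x k) (a k) = 0
        · have hz : ∀ i ∈ T.attach, w i.1 * q i k * Pf i k (x k) (a k) = 0 := by
            intro i hi
            exact (Finset.sum_eq_zero_iff_of_nonneg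
              (fun i _ => mul_nonneg (mul_nonneg (hw i.1 i.2) (hq i k))
                ((hPf i k (x k)).1 (a k)))).mp hD0 i hi
          rw [hD0, zero_div, mul_zero, zero_mul]
          refine Finset.sum_eq_zero fun i hi => ?_
          rw [hz i hi, zero_mul]
        · rw [dif_neg hD0]
          rw [mul_comm (q'' k) _, div_mul_cancel₀ _ h0, Finset.mul_sum]
          refine Finset.sum_congr rfl fun i _ => ?_
          field_simp

end Aux4
section Aux5

variable {ι : Type} [DecidableEq ι] {X A : ι → Type} [∀ i, Fintype (A i)]

theorem sub_erase_of_mem {K S : Finset ι} {k : ι} (hkK : k ∈ K) (hKS : K ⊆ S) :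
    K.erase k ⊆ S.erase k := Finset.erase_subset_erase k hKS

theorem sdiff_sub_erase {K S : Finset ι} {k : ι} (hkK : k ∈ K) :
    S \ K ⊆ S.erase k := fun i hi => Finset.mem_erase.mpr
  ⟨fun e => (Finset.mem_sdiff.mp hi).2 (e ▸ hkK), (Finset.mem_sdiff.mp hi).1⟩

theorem erase_sub_of_sub {K S : Finset ι} {k : ι} (hKS : K ⊆ S) :
    K.erase k ⊆ S := fun i hi => hKS (Finset.mem_of_mem_erase hi)

theorem singTuple_restr {B : ι → Type} {S : Finset ι} {k : ι} (hKS : ({k} : Finset ι) ⊆ S)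
    (x : (i : {j // j ∈ S}) → B i.1) :
    (singTupleEquiv B k).symm (x ⟨k, hKS (Finset.mem_singleton_self k)⟩) = restr hKS x := by
  funext i
  obtain ⟨i1, hi⟩ := i
  have h : i1 = k := Finset.mem_singleton.mp hi
  subst h
  rfl

theorem ins_restr {B : ι → Type} {S K : Finset ι} {k : ι} (hkK : k ∈ K) (hKS : K ⊆ S)
    (x : (i : {j // j ∈ S}) → B i.1) :
    ins hkK (x ⟨k, hKS hkK⟩)
      (restr (sub_erase_of_mem hkK hKS) (restr (erase_sub S k) x)) = restr hKS x := by
  funext i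
  obtain ⟨i1, hi⟩ := i
  show (if h : i1 = k then _ else _) = _
  split
  · next h => subst h; rfl
  · rfl

theorem prod_causal : ∀ (K : Finset ι) (P1 : Corr X A K), IsCausal X A K P1 →
    ∀ (S : Finset ι) (hKS : K ⊆ S), (S \ K).Nonempty →
    (∀ i ∈ S, X i → Nonempty (A i)) →
    ∀ (P2 : ((i : {j // j ∈ K}) → X i.1) → ((i : {j // j ∈ K}) → A i.1) → Corr X A (S \ K)),
    (∀ u v, IsCausal X A (S \ K) (P2 u v)) →
    IsCausal X A S (fun x a => P1 (restr hKS x) (restr hKS a) *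
      P2 (restr hKS x) (restr hKS a) (restr (sdiff_sub S K) x) (restr (sdiff_sub S K) a)) := by
  intro K P1 h1
  induction h1 with
  | base k P hP =>
    intro S hKS hne hA P2 hP2
    have hk : k ∈ S := hKS (Finset.mem_singleton_self k)
    obtain ⟨m, hm⟩ := hne
    have hmS : m ∈ S := (Finset.mem_sdiff.mp hm).1
    have hmk : m ≠ k := fun e => (Finset.mem_sdiff.mp hm).2 (e ▸ Finset.mem_singleton_self k)
    have hcard : 2 ≤ S.card := Finset.one_lt_card.mpr ⟨k, hk, m, hmS, fun e => hmk e.symm⟩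
    refine IsCausal.step S hcard _
      (fun k' => if k' = ⟨k, hk⟩ then 1 else 0)
      (fun k' => if h : k'.1 = k then
        (fun xk b => P ((singTupleEquiv X k).symm (cast (congrArg X h) xk))
          ((singTupleEquiv A k).symm (cast (congrArg A h) b)))
        else fun _ b => ((Fintype.card (A k'.1) : ℝ))⁻¹)
      (fun k' => if h : k'.1 = k then
        (fun xk ak y b => P2 ((singTupleEquiv X k).symm (cast (congrArg X h) xk))
          ((singTupleEquiv A k).symm (cast (congrArg A h) ak))
          (fun i => y ⟨i.1, Finset.mem_erase.mpr
            ⟨fun e => (Finset.mem_sdiff.mp i.2).2 (Finset.mem_singleton.mpr (e.trans h)),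
             (Finset.mem_sdiff.mp i.2).1⟩⟩)
          (fun i => b ⟨i.1, Finset.mem_erase.mpr
            ⟨fun e => (Finset.mem_sdiff.mp i.2).2 (Finset.mem_singleton.mpr (e.trans h)),
             (Finset.mem_sdiff.mp i.2).1⟩⟩))
        else fun _ _ => uCorr X A (S.erase k'.1))
      (fun k' => by positivity)
      (by rw [Finset.sum_ite_eq']; simp [Finset.mem_attach])
      (fun k' xk' => ?_) (fun k' xk' ak' => ?_) (fun x a => ?_)
    · -- Pfirst prob dist
      split
      · next h =>
        obtain ⟨k1, hk1⟩ := k'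
        dsimp at h
        subst h
        constructor
        · exact fun b => (hP _).1 _
        · have := (hP ((singTupleEquiv X k1).symm xk')).2
          rw [← Equiv.sum_comp (singTupleEquiv A k1).symm
            (P ((singTupleEquiv X k1).symm xk'))] at this
          exact this
      · constructor
        · intro b; positivity
        · have hpos : (0:ℝ) < Fintype.card (A k'.1) := by
            have := hA k'.1 k'.2 xk'
            exact_mod_cast Fintype.card_pos
          rw [Finset.sum_const, Finset.card_univ, nsmul_eq_mul]
          field_simp
    · -- Prest causal
      split
      · next h =>
        obtain ⟨k1, hk1⟩ := k'
        dsimp at h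
        subst h
        have e : S \ ({k1} : Finset ι) = S.erase k1 := (Finset.erase_eq S k1).symm
        exact isCausal_reindex e (hP2 _ _)
      · next h =>
        refine uCorr_causal _ ⟨k, Finset.mem_erase.mpr ⟨fun e => h e.symm, hk⟩⟩
          (fun i hi => hA i (Finset.mem_of_mem_erase hi))
    · -- decomposition equation
      rw [Finset.sum_eq_single_of_mem (⟨k, hk⟩ : {j // j ∈ S}) (Finset.mem_attach _ _)
        (fun b _ hb => by simp [hb])]
      dsimp only
      rw [if_pos rfl, dif_pos rfl, dif_pos rfl, one_mul]
      show _ = P ((singTupleEquiv X k).symm (x ⟨k, hKS (Finset.mem_singleton_self k)⟩))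
          ((singTupleEquiv A k).symm (a ⟨k, hKS (Finset.mem_singleton_self k)⟩)) *
        P2 ((singTupleEquiv X k).symm (x ⟨k, hKS (Finset.mem_singleton_self k)⟩))
          ((singTupleEquiv A k).symm (a ⟨k, hKS (Finset.mem_singleton_self k)⟩))
          (restr (sdiff_sub S {k}) x) (restr (sdiff_sub S {k}) a)
      rw [singTuple_restr hKS x, singTuple_restr hKS a]
  | step K hK P1 q1 Pf1 Pr1 hq1 hq11 hPf1 hPr1 hP1 IH =>
    intro S hKS hne hA P2 hP2
    have hcard : 2 ≤ S.card := le_trans hK (Finset.card_le_card hKS)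
    refine IsCausal.step S hcard _
      (fun k' => if h : k'.1 ∈ K then q1 ⟨k'.1, h⟩ else 0)
      (fun k' => if h : k'.1 ∈ K then Pf1 ⟨k'.1, h⟩
        else fun _ b => ((Fintype.card (A k'.1) : ℝ))⁻¹)
      (fun k' => if h : k'.1 ∈ K then
        (fun xk ak y b =>
          Pr1 ⟨k'.1, h⟩ xk ak (restr (sub_erase_of_mem h hKS) y)
              (restr (sub_erase_of_mem h hKS) b) *
          P2 (ins h xk (restr (sub_erase_of_mem h hKS) y))
             (ins h ak (restr (sub_erase_of_mem h hKS) b))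
             (restr (sdiff_sub_erase h) y) (restr (sdiff_sub_erase h) b))
        else fun _ _ => uCorr X A (S.erase k'.1))
      (fun k' => by split; exacts [hq1 _, le_refl 0])
      ?_ (fun k' xk' => ?_) (fun k' xk' ak' => ?_) (fun x a => ?_)
    · -- weights sum to 1
      rw [Finset.sum_attach S (fun i => if h : i ∈ K then q1 ⟨i, h⟩ else 0),
        ← Finset.sum_subset hKS (fun i _ hiK => dif_neg hiK),
        ← Finset.sum_attach K (fun i => if h : i ∈ K then q1 ⟨i, h⟩ else 0)]
      rw [← hq11]
      exact Finset.sum_congr rfl fun k _ => dif_pos k.2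
    · -- Pfirst prob dist
      split
      · next h => exact hPf1 ⟨k'.1, h⟩ xk'
      · constructor
        · intro b; positivity
        · have hpos : (0:ℝ) < Fintype.card (A k'.1) := by
            have := hA k'.1 k'.2 xk'
            exact_mod_cast Fintype.card_pos
          rw [Finset.sum_const, Finset.card_univ, nsmul_eq_mul]
          field_simp
    · -- Prest causal
      dsimp only
      split
      · next h =>
        obtain ⟨m, hm⟩ := hne
        have e : S \ K = (S.erase k'.1) \ (K.erase k'.1) := by
          ext i
          simp only [Finset.mem_sdiff, Finset.mem_erase]
          constructor
          · rintro ⟨hiS, hiK⟩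
            exact ⟨⟨fun e => hiK (e ▸ h), hiS⟩, fun hc => hiK hc.2⟩
          · rintro ⟨⟨hik, hiS⟩, hiK⟩
            exact ⟨hiS, fun hiK' => hiK ⟨hik, hiK'⟩⟩
        refine IH ⟨k'.1, h⟩ xk' ak' (S.erase k'.1) (sub_erase_of_mem h hKS)
          ⟨m, e ▸ hm⟩ (fun i hi => hA i (Finset.mem_of_mem_erase hi))
          (fun u v => reindex e (P2 (ins h xk' u) (ins h ak' v)))
          (fun u v => isCausal_reindex e (hP2 _ _))
      · next h =>
        obtain ⟨m, hmS, hmk⟩ := Finset.exists_mem_ne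
          (show 1 < S.card by omega) k'.1
        refine uCorr_causal _ ⟨m, Finset.mem_erase.mpr ⟨hmk, hmS⟩⟩
          (fun i hi => hA i (Finset.mem_of_mem_erase hi))
    · -- decomposition equation
      set P2val := P2 (restr hKS x) (restr hKS a)
        (restr (sdiff_sub S K) x) (restr (sdiff_sub S K) a) with hP2val
      set g : ι → ℝ := fun i => if h : i ∈ K then (if hS : i ∈ S then
        q1 ⟨i, h⟩ * Pf1 ⟨i, h⟩ (x ⟨i, hS⟩) (a ⟨i, hS⟩) *
          (Pr1 ⟨i, h⟩ (x ⟨i, hS⟩) (a ⟨i, hS⟩)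
            (restr (erase_sub_of_sub hKS) x) (restr (erase_sub_of_sub hKS) a) * P2val)
        else 0) else 0 with hgdef
      have step1 : ∀ k' ∈ S.attach, (if h : k'.1 ∈ K then q1 ⟨k'.1, h⟩ else 0) *
          (if h : k'.1 ∈ K then Pf1 ⟨k'.1, h⟩
            else fun _ b => ((Fintype.card (A k'.1) : ℝ))⁻¹) (x k') (a k') *
          (if h : k'.1 ∈ K then
            (fun xk ak y b =>
              Pr1 ⟨k'.1, h⟩ xk ak (restr (sub_erase_of_mem h hKS) y)
                  (restr (sub_erase_of_mem h hKS) b) *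
              P2 (ins h xk (restr (sub_erase_of_mem h hKS) y))
                 (ins h ak (restr (sub_erase_of_mem h hKS) b))
                 (restr (sdiff_sub_erase h) y) (restr (sdiff_sub_erase h) b))
            else fun _ _ => uCorr X A (S.erase k'.1)) (x k') (a k')
            (restr (erase_sub S k'.1) x) (restr (erase_sub S k'.1) a) = g k'.1 := by
        intro k' _
        obtain ⟨k1, hk1⟩ := k'
        dsimp only
        by_cases h : k1 ∈ K
        · rw [dif_pos h, dif_pos h, dif_pos h, hgdef]
          dsimp only
          rw [dif_pos h, dif_pos hk1]
          rw [show (x ⟨k1, hk1⟩) = (x ⟨k1, hKS h⟩) from rfl,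
            show (a ⟨k1, hk1⟩) = (a ⟨k1, hKS h⟩) from rfl,
            ins_restr h hKS x, ins_restr h hKS a]
          rfl
        · rw [dif_neg h, hgdef]
          dsimp only
          rw [dif_neg h, zero_mul, zero_mul]
          try rw [dif_neg h]
      rw [Finset.sum_congr rfl step1, Finset.sum_attach S g,
        ← Finset.sum_subset hKS (fun i _ hiK => dif_neg hiK),
        ← Finset.sum_attach K g]
      rw [hP1, Finset.sum_mul]
      refine Finset.sum_congr rfl fun k _ => ?_
      rw [hgdef]
      dsimp only
      rw [dif_pos k.2, dif_pos (hKS k.2)]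
      rw [mul_assoc]
      rfl

end Aux5

/-- for `N ≥ 2`, a correlation is causal iff it decomposes as a convex
combination, over nonempty strict subsets `K` of the parties, of products of a causal
correlation for the parties in `K` with causal correlations for the remaining parties
that may depend on the inputs and outputs of the parties in `K`. -/
theorem isCausal_iff_subset_decomposition {ι : Type} [DecidableEq ι]
    (X A : ι → Type) [∀ i, Fintype (A i)] (S : Finset ι) (hS : 2 ≤ S.card)
    (P : Corr X A S) :
    IsCausal X A S P ↔
    ∃ (q : Finset ι → ℝ) (PK : (K : Finset ι) → Corr X A K)
      (PR : (K : Finset ι) → ((i : {j // j ∈ K}) → X i.1) → ((i : {j // j ∈ K}) → A i.1) →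
        Corr X A (S \ K)),
      (∀ K, 0 ≤ q K) ∧
      (∑ K ∈ S.powerset.filter (fun K => K.Nonempty ∧ K ⊂ S), q K) = 1 ∧
      (∀ K, K.Nonempty → K ⊂ S → IsCausal X A K (PK K)) ∧
      (∀ K, K.Nonempty → K ⊂ S → ∀ xK aK, IsCausal X A (S \ K) (PR K xK aK)) ∧
      (∀ x a, P x a = ∑ K ∈ (S.powerset.filter (fun K => K.Nonempty ∧ K ⊂ S)).attach,
        q K.1 *
          PK K.1 (restr (Finset.mem_powerset.mp (Finset.mem_filter.mp K.2).1) x)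
            (restr (Finset.mem_powerset.mp (Finset.mem_filter.mp K.2).1) a) *
          PR K.1 (restr (Finset.mem_powerset.mp (Finset.mem_filter.mp K.2).1) x)
            (restr (Finset.mem_powerset.mp (Finset.mem_filter.mp K.2).1) a)
            (restr (sdiff_sub S K.1) x) (restr (sdiff_sub S K.1) a)) := by
  set F := S.powerset.filter (fun K => K.Nonempty ∧ K ⊂ S) with hF
  have hsingF : ∀ k ∈ S, ({k} : Finset ι) ∈ F := by
    intro k hk
    have hne : ({k} : Finset ι) ≠ S := by
      intro e; rw [← e] at hS; simp at hS
    exact Finset.mem_filter.mpr ⟨Finset.mem_powerset.mpr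
      (Finset.singleton_subset_iff.mpr hk), Finset.singleton_nonempty k,
      Finset.ssubset_iff_subset_ne.mpr ⟨Finset.singleton_subset_iff.mpr hk, hne⟩⟩
  constructor
  · -- forward
    intro h
    have hA := isCausal_hA h
    obtain ⟨q, Pf, Pr, hq, hq1, hPf, hPr, hP⟩ := isCausal_step_data h hS
    set qq : Finset ι → ℝ :=
      fun K => ∑ k ∈ S.attach, if K = {k.1} then q k else 0 with hqq
    set PKdef : (K : Finset ι) → Corr X A K := fun K =>
      if h : ∃ k, k ∈ S ∧ K = {k} then
        (fun u v => ∑ k ∈ S.attach, if hk : K = {k.1} then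
          Pf k (u ⟨k.1, by rw [hk]; exact Finset.mem_singleton_self _⟩)
            (v ⟨k.1, by rw [hk]; exact Finset.mem_singleton_self _⟩) else 0)
      else uCorr X A K with hPKdef
    set PRdef : (K : Finset ι) → ((i : {j // j ∈ K}) → X i.1) →
        ((i : {j // j ∈ K}) → A i.1) → Corr X A (S \ K) := fun K u v =>
      if h : ∃ k, k ∈ S ∧ K = {k} then
        (fun y b => ∑ k ∈ S.attach, if hk : K = {k.1} then
          Pr k (u ⟨k.1, by rw [hk]; exact Finset.mem_singleton_self _⟩)
            (v ⟨k.1, by rw [hk]; exact Finset.mem_singleton_self _⟩)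
            (fun i => y ⟨i.1, Finset.mem_sdiff.mpr ⟨Finset.mem_of_mem_erase i.2,
              fun hiK => (Finset.mem_erase.mp i.2).1
                (Finset.mem_singleton.mp (by rw [← hk]; exact hiK))⟩⟩)
            (fun i => b ⟨i.1, Finset.mem_sdiff.mpr ⟨Finset.mem_of_mem_erase i.2,
              fun hiK => (Finset.mem_erase.mp i.2).1
                (Finset.mem_singleton.mp (by rw [← hk]; exact hiK))⟩⟩)
          else 0)
      else uCorr X A (S \ K) with hPRdef
    have hevK : ∀ (k0 : {j // j ∈ S}) u v, PKdef {k0.1} u v =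
        Pf k0 (u ⟨k0.1, Finset.mem_singleton_self k0.1⟩)
          (v ⟨k0.1, Finset.mem_singleton_self k0.1⟩) := by
      intro k0 u v
      rw [hPKdef]
      dsimp only
      rw [dif_pos ⟨k0.1, k0.2, rfl⟩]
      rw [Finset.sum_eq_single_of_mem k0 (Finset.mem_attach _ _)
        (fun k _ hne => dif_neg (fun hk =>
          hne (Subtype.ext (Finset.singleton_inj.mp hk).symm)))]
      rw [dif_pos rfl]
    have hevR : ∀ (k0 : {j // j ∈ S}) u v, PRdef {k0.1} u v =
        reindex (Finset.erase_eq S k0.1)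
          (Pr k0 (u ⟨k0.1, Finset.mem_singleton_self k0.1⟩)
            (v ⟨k0.1, Finset.mem_singleton_self k0.1⟩)) := by
      intro k0 u v
      rw [hPRdef]
      dsimp only
      rw [dif_pos ⟨k0.1, k0.2, rfl⟩]
      funext y b
      rw [Finset.sum_eq_single_of_mem k0 (Finset.mem_attach _ _)
        (fun k _ hne => dif_neg (fun hk =>
          hne (Subtype.ext (Finset.singleton_inj.mp hk).symm)))]
      rw [dif_pos rfl]
      rfl
    refine ⟨qq, PKdef, PRdef, ?_, ?_, ?_, ?_, ?_⟩
    · intro K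
      exact Finset.sum_nonneg fun k _ => by split <;> [exact hq k; exact le_refl 0]
    · rw [Finset.sum_comm, ← hq1]
      refine Finset.sum_congr rfl fun k _ => ?_
      rw [Finset.sum_ite_eq' F ({k.1} : Finset ι) (fun _ => q k), if_pos (hsingF k.1 k.2)]
    · -- PK causal
      intro K hKne hKS
      by_cases h : ∃ k, k ∈ S ∧ K = {k}
      · obtain ⟨k0, hk0S, rfl⟩ := h
        refine IsCausal.base k0 _ (fun u => ⟨fun v => ?_, ?_⟩)
        · rw [hevK ⟨k0, hk0S⟩ u v]
          exact (hPf _ _).1 _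
        · calc ∑ v, PKdef {k0} u v
              = ∑ v, Pf ⟨k0, hk0S⟩ (u ⟨k0, Finset.mem_singleton_self k0⟩)
                ((singTupleEquiv A k0) v) :=
                Finset.sum_congr rfl fun v _ => hevK ⟨k0, hk0S⟩ u v
            _ = 1 := by
                rw [Equiv.sum_comp (singTupleEquiv A k0)]
                exact (hPf ⟨k0, hk0S⟩ (u ⟨k0, Finset.mem_singleton_self k0⟩)).2
      · rw [hPKdef]
        dsimp only
        rw [dif_neg h]
        exact uCorr_causal K hKne (fun i hi => hA i (hKS.subset hi))
    · -- PR causal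
      intro K hKne hKS u v
      by_cases h : ∃ k, k ∈ S ∧ K = {k}
      · obtain ⟨k0, hk0S, rfl⟩ := h
        rw [hevR ⟨k0, hk0S⟩ u v]
        exact isCausal_reindex _ (hPr _ _ _)
      · rw [hPRdef]
        dsimp only
        rw [dif_neg h]
        obtain ⟨m, hmS, hmK⟩ := Finset.exists_of_ssubset hKS
        exact uCorr_causal (S \ K) ⟨m, Finset.mem_sdiff.mpr ⟨hmS, hmK⟩⟩
          (fun i hi => hA i (Finset.mem_sdiff.mp hi).1)
    · -- decomposition equation
      intro x a
      rw [hP x a]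
      simp only [hqq]
      simp only [Finset.sum_mul]
      conv_rhs => rw [Finset.sum_comm]
      refine Finset.sum_congr rfl fun k _ => ?_
      rw [Finset.sum_eq_single_of_mem
        (⟨({k.1} : Finset ι), hsingF k.1 k.2⟩ : {x // x ∈ F}) (Finset.mem_attach _ _)
        (fun K _ hne => by
          rw [if_neg (fun hc => hne (Subtype.ext hc)), zero_mul, zero_mul])]
      rw [if_pos rfl]
      rw [hevK k, hevR k]
      rfl
  · -- backward
    rintro ⟨q, PK, PR, hq0, hq1, hPK, hPR, hdec⟩
    have hA : ∀ i ∈ S, X i → Nonempty (A i) := by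
      intro i hi xi
      have hmem := hsingF i hi
      have := hPK {i} (Finset.singleton_nonempty i) ((Finset.mem_filter.mp hmem).2.2)
      exact isCausal_hA this i (Finset.mem_singleton_self i) xi
    have hPrw : P = fun x a => ∑ K ∈ F.attach, q K.1 *
        (PK K.1 (restr (Finset.mem_powerset.mp (Finset.mem_filter.mp K.2).1) x)
            (restr (Finset.mem_powerset.mp (Finset.mem_filter.mp K.2).1) a) *
          PR K.1 (restr (Finset.mem_powerset.mp (Finset.mem_filter.mp K.2).1) x)
            (restr (Finset.mem_powerset.mp (Finset.mem_filter.mp K.2).1) a)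
            (restr (sdiff_sub S K.1) x) (restr (sdiff_sub S K.1) a)) := by
      funext x a
      rw [hdec x a]
      exact Finset.sum_congr rfl fun K _ => by rw [mul_assoc]
    rw [hPrw]
    refine convex_causal S (Finset.card_pos.mp (by omega)) hA F.attach
      (fun K => q K.1) _ (fun K _ => hq0 K.1) ?_ (fun K _ => ?_)
    · rw [Finset.sum_attach F q]; exact hq1
    · have hKS : K.1 ⊆ S := Finset.mem_powerset.mp (Finset.mem_filter.mp K.2).1
      have hKss : K.1 ⊂ S := (Finset.mem_filter.mp K.2).2.2
      have hKne : K.1.Nonempty := (Finset.mem_filter.mp K.2).2.1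
      obtain ⟨m, hmS, hmK⟩ := Finset.exists_of_ssubset hKss
      exact prod_causal K.1 (PK K.1) (hPK K.1 hKne hKss) S hKS
        ⟨m, Finset.mem_sdiff.mpr ⟨hmS, hmK⟩⟩ hA (PR K.1) (fun u v => hPR K.1 hKne hKss u v)
end

section
/- Consider the tripartite scenario where parties A_1, A_2, A_3 have binary inputs x_1, x_2, x_3 ∈ {0,1}, party A_1 has a single fixed output, and parties A_2, A_3 have binary outputs a_2, a_3 ∈ {0,1}. The correlation P(a_2,a_3|x_1,x_2,x_3) = δ_{x_1,0}·δ_{a_2,0}·δ_{a_3,x_2} + δ_{x_1,1}·δ_{a_2,x_3}·δ_{a_3,0} (where δ is the Kronecker delta) is a causal tripartite correlation, but it admits no decomposition of the form P(a|x) = Σ_{k=1}^3 q_k · P_k(a_{∖k}|x_{∖k}) · P_{k,x_{∖k},a_{∖k}}(a_k|x_k) with q_k ≥ 0 summing to 1, causal bipartite correlations P_k, and single-party distributions P_{k,x_{∖k},a_{∖k}} (i.e., no decomposition in which some party always acts last). -/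
/-- The output sets for the tripartite scenario of Eq. (7) of the paper: party `A_1` has a
single fixed output (`Unit`), parties `A_2` and `A_3` have binary outputs. -/
def A8 : Fin 3 → Type
  | ⟨0, _⟩ => Unit
  | ⟨1, _⟩ => Bool
  | ⟨_ + 2, _⟩ => Bool

instance A8.instFintype : (i : Fin 3) → Fintype (A8 i)
  | ⟨0, _⟩ => inferInstanceAs (Fintype Unit)
  | ⟨1, _⟩ => inferInstanceAs (Fintype Bool)
  | ⟨_ + 2, _⟩ => inferInstanceAs (Fintype Bool)

instance A8.instDecidableEq : (i : Fin 3) → DecidableEq (A8 i)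
  | ⟨0, _⟩ => inferInstanceAs (DecidableEq Unit)
  | ⟨1, _⟩ => inferInstanceAs (DecidableEq Bool)
  | ⟨_ + 2, _⟩ => inferInstanceAs (DecidableEq Bool)

/-- The correlation of Eq. (7): with inputs `x_1, x_2, x_3` and outputs `a_2, a_3` (party 1
has no output), `P(a_2, a_3 | x_1, x_2, x_3) = δ_{x_1,0} δ_{a_2,0} δ_{a_3,x_2}
+ δ_{x_1,1} δ_{a_2,x_3} δ_{a_3,0}`, encoding `0` as `false` and `1` as `true`. -/
def P8 : Corr (fun _ : Fin 3 => Bool) A8 Finset.univ := fun x a =>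
  if x ⟨0, Finset.mem_univ 0⟩ = false then
    (@ite _ (a ⟨1, Finset.mem_univ 1⟩ = false ∧ a ⟨2, Finset.mem_univ 2⟩ = x ⟨1, Finset.mem_univ 1⟩)
      (@instDecidableAnd _ _ (A8.instDecidableEq _ _ _) (A8.instDecidableEq _ _ _))
      1 0)
  else
    (@ite _ (a ⟨1, Finset.mem_univ 1⟩ = x ⟨2, Finset.mem_univ 2⟩ ∧ a ⟨2, Finset.mem_univ 2⟩ = false)
      (@instDecidableAnd _ _ (A8.instDecidableEq _ _ _) (A8.instDecidableEq _ _ _))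
      1 0)

section Machinery

variable {ι : Type} [DecidableEq ι] {X A : ι → Type} [∀ i, Fintype (A i)]

theorem ins_apply_self {S : Finset ι} {k : ι} (hk : k ∈ S) (xk : X k)
    (u : (i : {j // j ∈ S.erase k}) → X i.1) (h' : k ∈ S) :
    ins (X := X) hk xk u ⟨k, h'⟩ = xk := by
  show dite _ _ _ = _
  rw [dif_pos rfl]
  exact cast_eq _ xk

theorem ins_apply_ne {S : Finset ι} {k : ι} (hk : k ∈ S) (xk : X k)
    (u : (i : {j // j ∈ S.erase k}) → X i.1) {m : ι} (hm : m ∈ S) (hne : m ≠ k) :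
    ins (X := X) hk xk u ⟨m, hm⟩ = u ⟨m, Finset.mem_erase.mpr ⟨hne, hm⟩⟩ := by
  show dite _ _ _ = _
  rw [dif_neg hne]

theorem restr_ins {S : Finset ι} {k : ι} (hk : k ∈ S) (xk : X k)
    (u : (i : {j // j ∈ S.erase k}) → X i.1) :
    restr (X := X) (erase_sub S k) (ins hk xk u) = u := by
  funext i
  have hne : i.1 ≠ k := (Finset.mem_erase.mp i.2).1
  show dite _ _ _ = _
  rw [dif_neg hne]

/-- The equivalence between tuples on `S` and pairs of a value at `k` and a tuple on
`S.erase k`. -/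
def insEquiv {S : Finset ι} {k : ι} (hk : k ∈ S) :
    (A k × ((i : {j // j ∈ S.erase k}) → A i.1)) ≃ ((i : {j // j ∈ S}) → A i.1) where
  toFun p := ins hk p.1 p.2
  invFun a := (a ⟨k, hk⟩, restr (erase_sub S k) a)
  left_inv p := by
    obtain ⟨ak, u⟩ := p
    exact Prod.ext (ins_apply_self hk ak u hk) (restr_ins hk ak u)
  right_inv a := by
    funext i
    by_cases h : i.1 = k
    · obtain ⟨iv, him⟩ := i
      dsimp only at h
      subst h
      exact ins_apply_self hk _ _ him
    · obtain ⟨iv, him⟩ := i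
      exact ins_apply_ne hk _ _ him h

theorem sum_split {S : Finset ι} {k : ι} (hk : k ∈ S)
    (f : ((i : {j // j ∈ S}) → A i.1) → ℝ) :
    ∑ a, f a = ∑ ak : A k, ∑ u : (i : {j // j ∈ S.erase k}) → A i.1, f (ins hk ak u) := by
  calc ∑ a, f a = ∑ p : A k × ((i : {j // j ∈ S.erase k}) → A i.1), f (insEquiv (A := A) hk p) :=
        (Fintype.sum_equiv (insEquiv (A := A) hk) _ f fun _ => rfl).symm
    _ = _ := Fintype.sum_prod_type _

theorem causal_isProbDist {S : Finset ι} {P : Corr X A S} (h : IsCausal X A S P) :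
    ∀ x, IsProbDist (P x) := by
  induction h with
  | base k P hP => exact hP
  | step S hS P q Pfirst Prest hq hq1 hPfirst hPrest hP ih =>
    intro x
    constructor
    · intro a
      rw [hP]
      refine Finset.sum_nonneg fun k _ => ?_
      exact mul_nonneg (mul_nonneg (hq k) ((hPfirst k (x k)).1 (a k)))
        ((ih k (x k) (a k) _).1 _)
    · have : ∀ a, P x a = ∑ k ∈ S.attach, q k * Pfirst k (x k) (a k) *
          Prest k (x k) (a k) (restr (erase_sub S k.1) x) (restr (erase_sub S k.1) a) := hP x
      calc ∑ a, P x a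
          = ∑ a, ∑ k ∈ S.attach, q k * Pfirst k (x k) (a k) *
            Prest k (x k) (a k) (restr (erase_sub S k.1) x) (restr (erase_sub S k.1) a) := by
            exact Finset.sum_congr rfl fun a _ => hP x a
        _ = ∑ k ∈ S.attach, ∑ a, q k * Pfirst k (x k) (a k) *
            Prest k (x k) (a k) (restr (erase_sub S k.1) x) (restr (erase_sub S k.1) a) :=
            Finset.sum_comm
        _ = ∑ k ∈ S.attach, q k := by
            refine Finset.sum_congr rfl fun k _ => ?_
            rw [sum_split k.2]
            have heq : ∀ (ak : A k.1) (u : (i : {j // j ∈ S.erase k.1}) → A i.1),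
                q k * Pfirst k (x k) ((ins k.2 ak u) k) *
                  Prest k (x k) ((ins k.2 ak u) k) (restr (erase_sub S k.1) x)
                    (restr (erase_sub S k.1) (ins k.2 ak u))
                = q k * Pfirst k (x k) ak *
                  Prest k (x k) ak (restr (erase_sub S k.1) x) u := by
              intro ak u
              have h1 : (ins (X := A) k.2 ak u) k = ak := ins_apply_self k.2 ak u k.2
              rw [restr_ins]
              rw [show (ins (X := A) k.2 ak u) k = ak from h1]
            calc ∑ ak : A k.1, ∑ u, q k * Pfirst k (x k) ((ins k.2 ak u) k) *
                  Prest k (x k) ((ins k.2 ak u) k) (restr (erase_sub S k.1) x)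
                    (restr (erase_sub S k.1) (ins k.2 ak u))
                = ∑ ak : A k.1, ∑ u, q k * Pfirst k (x k) ak *
                  Prest k (x k) ak (restr (erase_sub S k.1) x) u := by
                  exact Finset.sum_congr rfl fun ak _ => Finset.sum_congr rfl fun u _ => heq ak u
              _ = ∑ ak : A k.1, q k * Pfirst k (x k) ak *
                  (∑ u, Prest k (x k) ak (restr (erase_sub S k.1) x) u) := by
                  exact Finset.sum_congr rfl fun ak _ => by rw [Finset.mul_sum]
              _ = ∑ ak : A k.1, q k * Pfirst k (x k) ak := by
                  refine Finset.sum_congr rfl fun ak _ => ?_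
                  rw [(ih k (x k) ak (restr (erase_sub S k.1) x)).2, mul_one]
              _ = q k * ∑ ak : A k.1, Pfirst k (x k) ak := by rw [Finset.mul_sum]
              _ = q k := by rw [(hPfirst k (x k)).2, mul_one]
        _ = 1 := hq1

theorem causal_of_singleton {S : Finset ι} (m : ι) (hS : S = {m}) (P : Corr X A S)
    (hP : ∀ x, IsProbDist (P x)) : IsCausal X A S P := by
  subst hS
  exact IsCausal.base m P hP

omit [DecidableEq ι] in
theorem tuple_ext {S : Finset ι} {B : ι → Type} {f g : (i : {j // j ∈ S}) → B i.1}
    (h : ∀ (i : ι) (hi : i ∈ S), f ⟨i, hi⟩ = g ⟨i, hi⟩) : f = g :=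
  funext fun i => h i.1 i.2

theorem prod_attach_erase (S : Finset ι) (k : ι) (hk : k ∈ S)
    (f : {j // j ∈ S} → ℝ) :
    ∏ i ∈ S.attach, f i = f ⟨k, hk⟩ *
      ∏ i ∈ (S.erase k).attach, f ⟨i.1, erase_sub S k i.2⟩ := by
  set g : ι → ℝ := fun i => if h : i ∈ S then f ⟨i, h⟩ else 1 with hg
  have h1 : ∏ i ∈ S.attach, f i = ∏ i ∈ S, g i := by
    rw [← Finset.prod_attach S g]
    refine Finset.prod_congr rfl fun i _ => ?_
    show f i = if h : (i : ι) ∈ S then f ⟨i.1, h⟩ else 1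
    rw [dif_pos i.2]
  have h2 : ∏ i ∈ (S.erase k).attach, f ⟨i.1, erase_sub S k i.2⟩ = ∏ i ∈ S.erase k, g i := by
    rw [← Finset.prod_attach (S.erase k) g]
    refine Finset.prod_congr rfl fun i _ => ?_
    show _ = if h : (i : ι) ∈ S then f ⟨i.1, h⟩ else 1
    rw [dif_pos (erase_sub S k i.2)]
  rw [h1, ← Finset.mul_prod_erase S g hk, h2]
  congr 1
  show (if h : k ∈ S then f ⟨k, h⟩ else 1) = f ⟨k, hk⟩
  exact dif_pos hk

theorem sum_attach_erase (S : Finset ι) (k : ι) (hk : k ∈ S)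
    (f : {j // j ∈ S} → ℝ) :
    ∑ i ∈ S.attach, f i = f ⟨k, hk⟩ +
      ∑ i ∈ (S.erase k).attach, f ⟨i.1, erase_sub S k i.2⟩ := by
  set g : ι → ℝ := fun i => if h : i ∈ S then f ⟨i, h⟩ else 0 with hg
  have h1 : ∑ i ∈ S.attach, f i = ∑ i ∈ S, g i := by
    rw [← Finset.sum_attach S g]
    refine Finset.sum_congr rfl fun i _ => ?_
    show f i = if h : (i : ι) ∈ S then f ⟨i.1, h⟩ else 0
    rw [dif_pos i.2]
  have h2 : ∑ i ∈ (S.erase k).attach, f ⟨i.1, erase_sub S k i.2⟩ = ∑ i ∈ S.erase k, g i := by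
    rw [← Finset.sum_attach (S.erase k) g]
    refine Finset.sum_congr rfl fun i _ => ?_
    show _ = if h : (i : ι) ∈ S then f ⟨i.1, h⟩ else 0
    rw [dif_pos (erase_sub S k i.2)]
  rw [h1, ← Finset.add_sum_erase S g hk, h2]
  congr 1
  show (if h : k ∈ S then f ⟨k, h⟩ else 0) = f ⟨k, hk⟩
  exact dif_pos hk

theorem sum_attach_single {S : Finset ι} (k : ι) (hk : k ∈ S)
    (f : {j // j ∈ S} → ℝ) (hf : ∀ j, j.1 ≠ k → f j = 0) :
    ∑ i ∈ S.attach, f i = f ⟨k, hk⟩ := by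
  rw [sum_attach_erase S k hk f]
  have : ∑ i ∈ (S.erase k).attach, f ⟨i.1, erase_sub S k i.2⟩ = 0 :=
    Finset.sum_eq_zero fun i _ => hf _ (Finset.mem_erase.mp i.2).1
  rw [this, add_zero]

end Machinery

/-- Deterministic output distribution: parties with `Bool` outputs output `c`, the `Unit`
party outputs its unique value. -/
def dOut (c : Bool) : (i : Fin 3) → A8 i → ℝ
  | ⟨0, _⟩, _ => 1
  | ⟨1, _⟩, a => @ite _ (a = c) (A8.instDecidableEq _ a c) 1 0
  | ⟨_ + 2, _⟩, a => @ite _ (a = c) (A8.instDecidableEq _ a c) 1 0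

theorem dOut_prob (c : Bool) (i : Fin 3) : IsProbDist (dOut c i) := by
  obtain ⟨v, hv⟩ := i
  match v, hv with
  | 0, hv =>
    refine ⟨fun a => by norm_num [dOut], ?_⟩
    show ∑ a : Unit, (1 : ℝ) = 1
    simp
  | 1, hv =>
    refine ⟨fun a => by dsimp [dOut]; positivity, ?_⟩
    show ∑ a : Bool, (if a = c then (1:ℝ) else 0) = 1
    cases c <;> simp
  | 2, hv =>
    refine ⟨fun a => by dsimp [dOut]; positivity, ?_⟩
    show ∑ a : Bool, (if a = c then (1:ℝ) else 0) = 1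
    cases c <;> simp

/-- Product of independent local distributions. -/
def indepCorr (S : Finset (Fin 3)) (p : (i : Fin 3) → Bool → A8 i → ℝ) :
    Corr (fun _ : Fin 3 => Bool) A8 S :=
  fun y b => ∏ i ∈ S.attach, p i.1 (y i) (b i)

theorem causal_indep : ∀ (n : ℕ), 1 ≤ n → ∀ (S : Finset (Fin 3)), S.card = n →
    ∀ (p : (i : Fin 3) → Bool → A8 i → ℝ), (∀ i x, IsProbDist (p i x)) →
    IsCausal (fun _ : Fin 3 => Bool) A8 S (indepCorr S p) := by
  intro n
  induction n with
  | zero => omega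
  | succ n ih =>
    intro _ S hcard p hp
    by_cases hn : n = 0
    · subst hn
      obtain ⟨m, rfl⟩ := Finset.card_eq_one.mp hcard
      refine IsCausal.base m _ ?_
      intro y
      have hm : m ∈ ({m} : Finset (Fin 3)) := Finset.mem_singleton_self m
      haveI : IsEmpty {j // j ∈ ({m} : Finset (Fin 3)).erase m} :=
        ⟨fun i => (Finset.mem_erase.mp i.2).1
          (Finset.mem_singleton.mp (Finset.mem_erase.mp i.2).2)⟩
      have hval : ∀ (ak : A8 m) (u : (i : {j // j ∈ ({m} : Finset (Fin 3)).erase m}) → A8 i.1),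
          indepCorr {m} p y (ins hm ak u) = p m (y ⟨m, hm⟩) ak := by
        intro ak u
        show ∏ i ∈ ({m} : Finset (Fin 3)).attach, p i.1 (y i) (ins hm ak u i)
          = p m (y ⟨m, hm⟩) ak
        rw [prod_attach_erase ({m} : Finset (Fin 3)) m hm]
        rw [Finset.attach_eq_empty_iff.mpr (Finset.erase_singleton m), Finset.prod_empty,
          mul_one]
        rw [ins_apply_self hm ak u hm]
      constructor
      · intro b
        exact Finset.prod_nonneg fun i _ => (hp i.1 (y i)).1 (b i)
      · rw [sum_split hm]
        calc ∑ ak : A8 m, ∑ u, indepCorr {m} p y (ins hm ak u)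
            = ∑ ak : A8 m, ∑ u : (i : {j // j ∈ ({m} : Finset (Fin 3)).erase m}) → A8 i.1,
              p m (y ⟨m, hm⟩) ak :=
              Finset.sum_congr rfl fun ak _ => Finset.sum_congr rfl fun u _ => hval ak u
          _ = ∑ ak : A8 m, p m (y ⟨m, hm⟩) ak := by
              refine Finset.sum_congr rfl fun ak _ => ?_
              haveI : Unique ((i : {j // j ∈ ({m} : Finset (Fin 3)).erase m}) → A8 i.1) :=
                Pi.uniqueOfIsEmpty _
              rw [Fintype.sum_unique]
          _ = 1 := (hp m (y ⟨m, hm⟩)).2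
    · have hn1 : 1 ≤ n := by omega
      have hn2 : 2 ≤ S.card := by omega
      obtain ⟨k, hk⟩ := Finset.card_pos.mp (by omega : 0 < S.card)
      refine IsCausal.step S hn2 _ (fun j => if j.1 = k then 1 else 0)
        (fun j x a => p j.1 x a)
        (fun j xj aj => indepCorr (S.erase j.1) p) ?_ ?_ ?_ ?_ ?_
      · intro j; split <;> norm_num
      · rw [sum_attach_single k hk _ (fun j hj => if_neg hj)]
        exact if_pos rfl
      · exact fun j x => hp j.1 x
      · intro j xj aj
        have hc : (S.erase j.1).card = n := by
          rw [Finset.card_erase_of_mem j.2, hcard]; omega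
        exact ih hn1 _ hc p hp
      · intro y b
        rw [sum_attach_single k hk _ (fun j hj => by
          rw [if_neg hj, zero_mul, zero_mul])]
        dsimp only
        rw [if_pos rfl, one_mul]
        show ∏ i ∈ S.attach, p i.1 (y i) (b i) = _
        rw [prod_attach_erase S k hk (fun i => p i.1 (y i) (b i))]
        rfl

theorem h01 : (1 : Fin 3) ∈ Finset.univ.erase (0 : Fin 3) := by decide
theorem h02 : (2 : Fin 3) ∈ Finset.univ.erase (0 : Fin 3) := by decide

theorem dOut_0 (c : Bool) (a : A8 0) : dOut c 0 a = 1 := rfl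
theorem dOut_1 (c : Bool) (a : A8 1) : dOut c 1 a = @ite _ (a = c) (A8.instDecidableEq _ a c) 1 0 := rfl
theorem dOut_2 (c : Bool) (a : A8 2) : dOut c 2 a = @ite _ (a = c) (A8.instDecidableEq _ a c) 1 0 := rfl

/-- The correlation of the parties 2, 3 after party 1 (with input `x1`) acted first. -/
def Q (x1 : Bool) : Corr (fun _ : Fin 3 => Bool) A8 (Finset.univ.erase (0 : Fin 3)) :=
  fun y b =>
    if x1 = false then
      (@ite _ (b ⟨1, h01⟩ = false ∧ b ⟨2, h02⟩ = y ⟨1, h01⟩)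
        (@instDecidableAnd _ _ (A8.instDecidableEq _ _ _) (A8.instDecidableEq _ _ _)) 1 0)
    else
      (@ite _ (b ⟨1, h01⟩ = y ⟨2, h02⟩ ∧ b ⟨2, h02⟩ = false)
        (@instDecidableAnd _ _ (A8.instDecidableEq _ _ _) (A8.instDecidableEq _ _ _)) 1 0)

theorem hk2 : (2 : Fin 3) ∈ (Finset.univ.erase (0 : Fin 3)).erase 1 := by decide
theorem hk1 : (1 : Fin 3) ∈ (Finset.univ.erase (0 : Fin 3)).erase 2 := by decide

theorem Q_causal (x1 : Bool) :
    IsCausal (fun _ : Fin 3 => Bool) A8 (Finset.univ.erase (0 : Fin 3)) (Q x1) := by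
  cases x1
  · -- x1 = false : party 1 (index 1) acts first
    refine IsCausal.step _ (by decide) _ (fun j => if j.1 = 1 then 1 else 0)
      (fun j x a => dOut false j.1 a)
      (fun j xj aj => indepCorr _ (fun i _ a => dOut xj i a)) ?_ ?_ ?_ ?_ ?_
    · intro j; split <;> norm_num
    · rw [sum_attach_single 1 h01 _ (fun j hj => if_neg hj)]; exact if_pos rfl
    · exact fun j x => dOut_prob false j.1
    · intro j xj aj
      refine causal_indep 1 le_rfl _ ?_ _ (fun i x => dOut_prob xj i)
      rw [Finset.card_erase_of_mem j.2]; decide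
    · intro y b
      rw [sum_attach_single 1 h01 _
        (fun j hj => by rw [if_neg hj, zero_mul, zero_mul])]
      dsimp only
      rw [if_pos rfl, one_mul]
      show Q false y b = _ * indepCorr _ _ _ _
      unfold indepCorr
      rw [prod_attach_erase _ 2 hk2]
      rw [Finset.attach_eq_empty_iff.mpr (by decide :
        ((Finset.univ.erase (0 : Fin 3)).erase 1).erase 2 = ∅), Finset.prod_empty, mul_one]
      dsimp only
      rw [dOut_1, dOut_2]
      show (if (false : Bool) = false then
          (@ite _ (b ⟨1, h01⟩ = false ∧ b ⟨2, h02⟩ = y ⟨1, h01⟩) (@instDecidableAnd _ _ (A8.instDecidableEq (1 : Fin 3) _ _) (A8.instDecidableEq (2 : Fin 3) _ _)) (1:ℝ) 0)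
        else _) = _
      rw [if_pos rfl]
      have hre : restr (erase_sub (Finset.univ.erase (0 : Fin 3)) 1) b ⟨2, hk2⟩
          = b ⟨2, h02⟩ := rfl
      rw [hre]
      by_cases hb1 : b ⟨1, h01⟩ = false <;>
        by_cases hb2 : b ⟨2, h02⟩ = y ⟨1, h01⟩ <;>
        split_ifs <;> norm_num <;> tauto
  · -- x1 = true : party 2 (index 2) acts first
    refine IsCausal.step _ (by decide) _ (fun j => if j.1 = 2 then 1 else 0)
      (fun j x a => dOut false j.1 a)
      (fun j xj aj => indepCorr _ (fun i _ a => dOut xj i a)) ?_ ?_ ?_ ?_ ?_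
    · intro j; split <;> norm_num
    · rw [sum_attach_single 2 h02 _ (fun j hj => if_neg hj)]; exact if_pos rfl
    · exact fun j x => dOut_prob false j.1
    · intro j xj aj
      refine causal_indep 1 le_rfl _ ?_ _ (fun i x => dOut_prob xj i)
      rw [Finset.card_erase_of_mem j.2]; decide
    · intro y b
      rw [sum_attach_single 2 h02 _
        (fun j hj => by rw [if_neg hj, zero_mul, zero_mul])]
      dsimp only
      rw [if_pos rfl, one_mul]
      show Q true y b = _ * indepCorr _ _ _ _
      unfold indepCorr
      rw [prod_attach_erase _ 1 hk1]
      rw [Finset.attach_eq_empty_iff.mpr (by decide :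
        ((Finset.univ.erase (0 : Fin 3)).erase 2).erase 1 = ∅), Finset.prod_empty, mul_one]
      dsimp only
      rw [dOut_1, dOut_2]
      show (if (true : Bool) = false then _
        else (@ite _ (b ⟨1, h01⟩ = y ⟨2, h02⟩ ∧ b ⟨2, h02⟩ = false) (@instDecidableAnd _ _ (A8.instDecidableEq (1 : Fin 3) _ _) (A8.instDecidableEq (2 : Fin 3) _ _)) (1:ℝ) 0)) = _
      rw [if_neg (by simp)]
      have hre : restr (erase_sub (Finset.univ.erase (0 : Fin 3)) 2) b ⟨1, hk1⟩
          = b ⟨1, h01⟩ := rfl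
      rw [hre]
      by_cases hb1 : b ⟨1, h01⟩ = y ⟨2, h02⟩ <;>
        by_cases hb2 : b ⟨2, h02⟩ = false <;>
        split_ifs <;> norm_num <;> tauto

/-- The conditional correlations for the remaining parties after one party acts first,
for the top-level decomposition of `P8`. -/
def PrestTop : (k : {j // j ∈ (Finset.univ : Finset (Fin 3))}) → Bool → A8 k.1 →
    Corr (fun _ : Fin 3 => Bool) A8 (Finset.univ.erase k.1)
  | ⟨⟨0, _⟩, _⟩ => fun x1 _ => Q x1
  | ⟨⟨1, _⟩, _⟩ => fun _ _ => indepCorr _ (fun i _ a => dOut false i a)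
  | ⟨⟨_ + 2, _⟩, _⟩ => fun _ _ => indepCorr _ (fun i _ a => dOut false i a)

theorem P8_causal : IsCausal (fun _ : Fin 3 => Bool) A8 Finset.univ P8 := by
  refine IsCausal.step Finset.univ (by decide) P8
    (fun j => if j.1 = 0 then 1 else 0)
    (fun j x a => dOut false j.1 a)
    PrestTop ?_ ?_ ?_ ?_ ?_
  · intro j; split <;> norm_num
  · rw [sum_attach_single 0 (Finset.mem_univ 0) _ (fun j hj => if_neg hj)]
    exact if_pos rfl
  · exact fun j x => dOut_prob false j.1
  · intro j xj aj
    obtain ⟨⟨v, hv⟩, hm⟩ := j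
    match v, hv, hm, xj, aj with
    | 0, hv, hm, xj, aj =>
      exact Q_causal xj
    | 1, hv, hm, xj, aj =>
      exact causal_indep 2 (by norm_num) _ (by rw [Finset.card_erase_of_mem (Finset.mem_univ _)]; rfl) _ (fun i x => dOut_prob false i)
    | 2, hv, hm, xj, aj =>
      exact causal_indep 2 (by norm_num) _ (by rw [Finset.card_erase_of_mem (Finset.mem_univ _)]; rfl) _ (fun i x => dOut_prob false i)
  · intro x a
    rw [sum_attach_single 0 (Finset.mem_univ 0) _
      (fun j hj => by rw [if_neg hj, zero_mul, zero_mul])]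
    dsimp only
    rw [if_pos rfl, one_mul, dOut_0, one_mul]
    rfl

def mkX (v0 v1 v2 : Bool) : Fin 3 → Bool
  | ⟨0, _⟩ => v0
  | ⟨1, _⟩ => v1
  | ⟨_ + 2, _⟩ => v2

def mkA (v1 v2 : Bool) : (i : Fin 3) → A8 i
  | ⟨0, _⟩ => ()
  | ⟨1, _⟩ => v1
  | ⟨_ + 2, _⟩ => v2

theorem tuple_ext3 {S : Finset (Fin 3)} {B : Fin 3 → Type} {f g : (i : {j // j ∈ S}) → B i.1}
    (h0 : ∀ hv (hi : (⟨0, hv⟩ : Fin 3) ∈ S), f ⟨⟨0, hv⟩, hi⟩ = g ⟨⟨0, hv⟩, hi⟩)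
    (h1 : ∀ hv (hi : (⟨1, hv⟩ : Fin 3) ∈ S), f ⟨⟨1, hv⟩, hi⟩ = g ⟨⟨1, hv⟩, hi⟩)
    (h2 : ∀ hv (hi : (⟨2, hv⟩ : Fin 3) ∈ S), f ⟨⟨2, hv⟩, hi⟩ = g ⟨⟨2, hv⟩, hi⟩) : f = g := by
  funext i
  obtain ⟨⟨v, hv⟩, hi⟩ := i
  match v, hv, hi with
  | 0, hv, hi => exact h0 hv hi
  | 1, hv, hi => exact h1 hv hi
  | n + 2, hv, hi =>
    have hn : n = 0 := by omega
    subst hn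
    exact h2 hv hi

theorem fin3_cases {P : Fin 3 → Prop} (h0 : ∀ hv, P ⟨0, hv⟩) (h1 : ∀ hv, P ⟨1, hv⟩)
    (h2 : ∀ hv, P ⟨2, hv⟩) : ∀ i, P i := by
  intro i
  obtain ⟨v, hv⟩ := i
  match v, hv with
  | 0, hv => exact h0 hv
  | 1, hv => exact h1 hv
  | n + 2, hv =>
    have hn : n = 0 := by omega
    subst hn
    exact h2 hv

theorem sum_univ3 (f : {j // j ∈ (Finset.univ : Finset (Fin 3))} → ℝ) :
    ∑ j ∈ Finset.univ.attach, f j = f ⟨0, Finset.mem_univ 0⟩ + f ⟨1, Finset.mem_univ 1⟩ +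
      f ⟨2, Finset.mem_univ 2⟩ := by
  rw [sum_attach_erase Finset.univ 0 (Finset.mem_univ 0) f]
  rw [sum_attach_erase (Finset.univ.erase 0) 1 h01 _]
  rw [sum_attach_erase ((Finset.univ.erase 0).erase 1) 2 hk2 _]
  rw [Finset.attach_eq_empty_iff.mpr (by decide :
    (((Finset.univ.erase (0 : Fin 3)).erase 1).erase 2) = ∅), Finset.sum_empty, add_zero]
  exact (add_assoc _ _ _).symm

theorem h12 : (2 : Fin 3) ∈ Finset.univ.erase (1 : Fin 3) := by decide
theorem h21 : (1 : Fin 3) ∈ Finset.univ.erase (2 : Fin 3) := by decide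

/-- the dynamical-order correlation of Eq. (7) is causal, but admits no
decomposition of the form (5) in which some party always acts last. -/
theorem dynamical_example_causal_but_no_party_last_form :
    IsCausal (fun _ : Fin 3 => Bool) A8 Finset.univ P8 ∧
    ¬ ∃ (q : {j // j ∈ (Finset.univ : Finset (Fin 3))} → ℝ)
        (PNk : (k : {j // j ∈ (Finset.univ : Finset (Fin 3))}) →
          Corr (fun _ : Fin 3 => Bool) A8 (Finset.univ.erase k.1))
        (Plast : (k : {j // j ∈ (Finset.univ : Finset (Fin 3))}) →
          ((i : {j // j ∈ Finset.univ.erase k.1}) → Bool) →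
          ((i : {j // j ∈ Finset.univ.erase k.1}) → A8 i.1) → Bool → A8 k.1 → ℝ),
        (∀ k, 0 ≤ q k) ∧ (∑ k ∈ Finset.univ.attach, q k = 1) ∧
        (∀ k, IsCausal (fun _ : Fin 3 => Bool) A8 (Finset.univ.erase k.1) (PNk k)) ∧
        (∀ k u b xk, IsProbDist (Plast k u b xk)) ∧
        (∀ x a, P8 x a = ∑ k ∈ Finset.univ.attach, q k *
            PNk k (restr (X := fun _ : Fin 3 => Bool) (erase_sub Finset.univ k.1) x)
              (restr (erase_sub Finset.univ k.1) a) *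
            Plast k (restr (X := fun _ : Fin 3 => Bool) (erase_sub Finset.univ k.1) x)
              (restr (erase_sub Finset.univ k.1) a) (x k) (a k)) := by
  refine ⟨P8_causal, ?_⟩
  rintro ⟨q, PNk, Plast, hq, hq1, hcaus, hprob, hP⟩
  -- Step A: q at party 1 (the middle party) vanishes
  have key1 : ∀ b : (i : {j // j ∈ Finset.univ.erase (1 : Fin 3)}) → A8 i.1,
      q ⟨1, Finset.mem_univ 1⟩ * PNk ⟨1, Finset.mem_univ 1⟩ (fun _ => false) b = 0 := by
    intro b
    have hterm : ∀ a2v : Bool,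
        q ⟨1, Finset.mem_univ 1⟩ * PNk ⟨1, Finset.mem_univ 1⟩ (fun _ => false) b *
          Plast ⟨1, Finset.mem_univ 1⟩ (fun _ => false) b (!(b ⟨2, h12⟩)) a2v = 0 := by
      intro a2v
      have hxr : restr (X := fun _ : Fin 3 => Bool) (erase_sub Finset.univ 1)
          (fun i : {j // j ∈ (Finset.univ : Finset (Fin 3))} =>
            mkX false (!(b ⟨2, h12⟩)) false i.1) = (fun _ => false) := by
        refine tuple_ext3 (B := fun _ => Bool) ?_ ?_ ?_
        · intro hv hi; rfl
        · intro hv hi; exact absurd rfl (Finset.mem_erase.mp hi).1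
        · intro hv hi; rfl
      have har : restr (erase_sub Finset.univ 1)
          (fun i : {j // j ∈ (Finset.univ : Finset (Fin 3))} =>
            mkA a2v (b ⟨2, h12⟩) i.1) = b := by
        refine tuple_ext3 (B := A8) ?_ ?_ ?_
        · intro hv hi; rfl
        · intro hv hi; exact absurd rfl (Finset.mem_erase.mp hi).1
        · intro hv hi; rfl
      have hP8 : P8 (fun i => mkX false (!(b ⟨2, h12⟩)) false i.1)
          (fun i => mkA a2v (b ⟨2, h12⟩) i.1) = 0 := by
        show (@ite _ (a2v = false ∧ (b ⟨2, h12⟩ : Bool) = !(b ⟨2, h12⟩)) (@instDecidableAnd _ _ (A8.instDecidableEq (1 : Fin 3) _ _) (A8.instDecidableEq (2 : Fin 3) _ _)) (1:ℝ) 0) = 0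
        exact if_neg fun h => Bool.not_ne_self _ h.2.symm
      have h' : (0:ℝ) =
          q ⟨0, Finset.mem_univ 0⟩ *
            PNk ⟨0, Finset.mem_univ 0⟩
              (restr (X := fun _ : Fin 3 => Bool) (erase_sub Finset.univ 0)
                (fun i => mkX false (!(b ⟨2, h12⟩)) false i.1))
              (restr (erase_sub Finset.univ 0) (fun i => mkA a2v (b ⟨2, h12⟩) i.1)) *
            Plast ⟨0, Finset.mem_univ 0⟩
              (restr (X := fun _ : Fin 3 => Bool) (erase_sub Finset.univ 0)
                (fun i => mkX false (!(b ⟨2, h12⟩)) false i.1))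
              (restr (erase_sub Finset.univ 0) (fun i => mkA a2v (b ⟨2, h12⟩) i.1))
              false () +
          q ⟨1, Finset.mem_univ 1⟩ *
            PNk ⟨1, Finset.mem_univ 1⟩
              (restr (X := fun _ : Fin 3 => Bool) (erase_sub Finset.univ 1)
                (fun i => mkX false (!(b ⟨2, h12⟩)) false i.1))
              (restr (erase_sub Finset.univ 1) (fun i => mkA a2v (b ⟨2, h12⟩) i.1)) *
            Plast ⟨1, Finset.mem_univ 1⟩
              (restr (X := fun _ : Fin 3 => Bool) (erase_sub Finset.univ 1)
                (fun i => mkX false (!(b ⟨2, h12⟩)) false i.1))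
              (restr (erase_sub Finset.univ 1) (fun i => mkA a2v (b ⟨2, h12⟩) i.1))
              (!(b ⟨2, h12⟩)) a2v +
          q ⟨2, Finset.mem_univ 2⟩ *
            PNk ⟨2, Finset.mem_univ 2⟩
              (restr (X := fun _ : Fin 3 => Bool) (erase_sub Finset.univ 2)
                (fun i => mkX false (!(b ⟨2, h12⟩)) false i.1))
              (restr (erase_sub Finset.univ 2) (fun i => mkA a2v (b ⟨2, h12⟩) i.1)) *
            Plast ⟨2, Finset.mem_univ 2⟩
              (restr (X := fun _ : Fin 3 => Bool) (erase_sub Finset.univ 2)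
                (fun i => mkX false (!(b ⟨2, h12⟩)) false i.1))
              (restr (erase_sub Finset.univ 2) (fun i => mkA a2v (b ⟨2, h12⟩) i.1))
              false (b ⟨2, h12⟩) := by
        rw [← hP8, hP _ _, sum_univ3]
        rfl
      rw [hxr, har] at h'
      have h1 : (0:ℝ) ≤
          q ⟨0, Finset.mem_univ 0⟩ *
            PNk ⟨0, Finset.mem_univ 0⟩
              (restr (X := fun _ : Fin 3 => Bool) (erase_sub Finset.univ 0)
                (fun i => mkX false (!(b ⟨2, h12⟩)) false i.1))
              (restr (erase_sub Finset.univ 0) (fun i => mkA a2v (b ⟨2, h12⟩) i.1)) *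
            Plast ⟨0, Finset.mem_univ 0⟩
              (restr (X := fun _ : Fin 3 => Bool) (erase_sub Finset.univ 0)
                (fun i => mkX false (!(b ⟨2, h12⟩)) false i.1))
              (restr (erase_sub Finset.univ 0) (fun i => mkA a2v (b ⟨2, h12⟩) i.1))
              false () :=
        mul_nonneg (mul_nonneg (hq _) ((causal_isProbDist (hcaus _) _).1 _))
          ((hprob _ _ _ _).1 _)
      have h2 : (0:ℝ) ≤
          q ⟨2, Finset.mem_univ 2⟩ *
            PNk ⟨2, Finset.mem_univ 2⟩
              (restr (X := fun _ : Fin 3 => Bool) (erase_sub Finset.univ 2)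
                (fun i => mkX false (!(b ⟨2, h12⟩)) false i.1))
              (restr (erase_sub Finset.univ 2) (fun i => mkA a2v (b ⟨2, h12⟩) i.1)) *
            Plast ⟨2, Finset.mem_univ 2⟩
              (restr (X := fun _ : Fin 3 => Bool) (erase_sub Finset.univ 2)
                (fun i => mkX false (!(b ⟨2, h12⟩)) false i.1))
              (restr (erase_sub Finset.univ 2) (fun i => mkA a2v (b ⟨2, h12⟩) i.1))
              false (b ⟨2, h12⟩) :=
        mul_nonneg (mul_nonneg (hq _) ((causal_isProbDist (hcaus _) _).1 _))
          ((hprob _ _ _ _).1 _)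
      have h3 : (0:ℝ) ≤ q ⟨1, Finset.mem_univ 1⟩ *
          PNk ⟨1, Finset.mem_univ 1⟩ (fun _ => false) b *
          Plast ⟨1, Finset.mem_univ 1⟩ (fun _ => false) b (!(b ⟨2, h12⟩)) a2v :=
        mul_nonneg (mul_nonneg (hq _) ((causal_isProbDist (hcaus _) _).1 _))
          ((hprob _ _ _ _).1 _)
      linarith
    have hpd : IsProbDist (fun v : Bool =>
        Plast ⟨1, Finset.mem_univ 1⟩ (fun _ => false) b (!(b ⟨2, h12⟩)) v) :=
      hprob ⟨1, Finset.mem_univ 1⟩ (fun _ => false) b (!(b ⟨2, h12⟩))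
    have hL : Plast ⟨1, Finset.mem_univ 1⟩ (fun _ => false) b (!(b ⟨2, h12⟩)) true +
        Plast ⟨1, Finset.mem_univ 1⟩ (fun _ => false) b (!(b ⟨2, h12⟩)) false = 1 := by
      have := hpd.2
      rwa [Fintype.sum_bool] at this
    calc q ⟨1, Finset.mem_univ 1⟩ * PNk ⟨1, Finset.mem_univ 1⟩ (fun _ => false) b
        = q ⟨1, Finset.mem_univ 1⟩ * PNk ⟨1, Finset.mem_univ 1⟩ (fun _ => false) b *
            (Plast ⟨1, Finset.mem_univ 1⟩ (fun _ => false) b (!(b ⟨2, h12⟩)) true +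
             Plast ⟨1, Finset.mem_univ 1⟩ (fun _ => false) b (!(b ⟨2, h12⟩)) false) := by
          rw [hL, mul_one]
      _ = q ⟨1, Finset.mem_univ 1⟩ * PNk ⟨1, Finset.mem_univ 1⟩ (fun _ => false) b *
            Plast ⟨1, Finset.mem_univ 1⟩ (fun _ => false) b (!(b ⟨2, h12⟩)) true +
          q ⟨1, Finset.mem_univ 1⟩ * PNk ⟨1, Finset.mem_univ 1⟩ (fun _ => false) b *
            Plast ⟨1, Finset.mem_univ 1⟩ (fun _ => false) b (!(b ⟨2, h12⟩)) false := by ring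
      _ = 0 := by rw [hterm true, hterm false, add_zero]
  have hq1z : q ⟨1, Finset.mem_univ 1⟩ = 0 := by
    have hN := (causal_isProbDist (hcaus ⟨1, Finset.mem_univ 1⟩) (fun _ => false)).2
    calc q ⟨1, Finset.mem_univ 1⟩
        = q ⟨1, Finset.mem_univ 1⟩ *
          ∑ b, PNk ⟨1, Finset.mem_univ 1⟩ (fun _ => false) b := by rw [hN, mul_one]
      _ = ∑ b, q ⟨1, Finset.mem_univ 1⟩ * PNk ⟨1, Finset.mem_univ 1⟩ (fun _ => false) b :=
          Finset.mul_sum _ _ _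
      _ = 0 := Finset.sum_eq_zero fun b _ => key1 b
  -- Step B: q at party 2 (the last party) vanishes
  have key2 : ∀ b : (i : {j // j ∈ Finset.univ.erase (2 : Fin 3)}) → A8 i.1,
      q ⟨2, Finset.mem_univ 2⟩ * PNk ⟨2, Finset.mem_univ 2⟩
        (fun i => mkX true false false i.1) b = 0 := by
    intro b
    have hterm : ∀ a3v : Bool,
        q ⟨2, Finset.mem_univ 2⟩ * PNk ⟨2, Finset.mem_univ 2⟩
          (fun i => mkX true false false i.1) b *
          Plast ⟨2, Finset.mem_univ 2⟩ (fun i => mkX true false false i.1) b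
            (!(b ⟨1, h21⟩)) a3v = 0 := by
      intro a3v
      have hxr : restr (X := fun _ : Fin 3 => Bool) (erase_sub Finset.univ 2)
          (fun i : {j // j ∈ (Finset.univ : Finset (Fin 3))} =>
            mkX true false (!(b ⟨1, h21⟩)) i.1) = (fun i => mkX true false false i.1) := by
        refine tuple_ext3 (B := fun _ => Bool) ?_ ?_ ?_
        · intro hv hi; rfl
        · intro hv hi; rfl
        · intro hv hi; exact absurd rfl (Finset.mem_erase.mp hi).1
      have har : restr (erase_sub Finset.univ 2)
          (fun i : {j // j ∈ (Finset.univ : Finset (Fin 3))} =>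
            mkA (b ⟨1, h21⟩) a3v i.1) = b := by
        refine tuple_ext3 (B := A8) ?_ ?_ ?_
        · intro hv hi; rfl
        · intro hv hi; rfl
        · intro hv hi; exact absurd rfl (Finset.mem_erase.mp hi).1
      have hP8 : P8 (fun i => mkX true false (!(b ⟨1, h21⟩)) i.1)
          (fun i => mkA (b ⟨1, h21⟩) a3v i.1) = 0 := by
        show (@ite _ ((b ⟨1, h21⟩ : Bool) = !(b ⟨1, h21⟩) ∧ a3v = false) (@instDecidableAnd _ _ (A8.instDecidableEq (1 : Fin 3) _ _) (A8.instDecidableEq (2 : Fin 3) _ _)) (1:ℝ) 0) = 0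
        exact if_neg fun h => Bool.not_ne_self _ h.1.symm
      have h' : (0:ℝ) =
          q ⟨0, Finset.mem_univ 0⟩ *
            PNk ⟨0, Finset.mem_univ 0⟩
              (restr (X := fun _ : Fin 3 => Bool) (erase_sub Finset.univ 0)
                (fun i => mkX true false (!(b ⟨1, h21⟩)) i.1))
              (restr (erase_sub Finset.univ 0) (fun i => mkA (b ⟨1, h21⟩) a3v i.1)) *
            Plast ⟨0, Finset.mem_univ 0⟩
              (restr (X := fun _ : Fin 3 => Bool) (erase_sub Finset.univ 0)
                (fun i => mkX true false (!(b ⟨1, h21⟩)) i.1))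
              (restr (erase_sub Finset.univ 0) (fun i => mkA (b ⟨1, h21⟩) a3v i.1))
              true () +
          q ⟨1, Finset.mem_univ 1⟩ *
            PNk ⟨1, Finset.mem_univ 1⟩
              (restr (X := fun _ : Fin 3 => Bool) (erase_sub Finset.univ 1)
                (fun i => mkX true false (!(b ⟨1, h21⟩)) i.1))
              (restr (erase_sub Finset.univ 1) (fun i => mkA (b ⟨1, h21⟩) a3v i.1)) *
            Plast ⟨1, Finset.mem_univ 1⟩
              (restr (X := fun _ : Fin 3 => Bool) (erase_sub Finset.univ 1)
                (fun i => mkX true false (!(b ⟨1, h21⟩)) i.1))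
              (restr (erase_sub Finset.univ 1) (fun i => mkA (b ⟨1, h21⟩) a3v i.1))
              false (b ⟨1, h21⟩) +
          q ⟨2, Finset.mem_univ 2⟩ *
            PNk ⟨2, Finset.mem_univ 2⟩
              (restr (X := fun _ : Fin 3 => Bool) (erase_sub Finset.univ 2)
                (fun i => mkX true false (!(b ⟨1, h21⟩)) i.1))
              (restr (erase_sub Finset.univ 2) (fun i => mkA (b ⟨1, h21⟩) a3v i.1)) *
            Plast ⟨2, Finset.mem_univ 2⟩
              (restr (X := fun _ : Fin 3 => Bool) (erase_sub Finset.univ 2)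
                (fun i => mkX true false (!(b ⟨1, h21⟩)) i.1))
              (restr (erase_sub Finset.univ 2) (fun i => mkA (b ⟨1, h21⟩) a3v i.1))
              (!(b ⟨1, h21⟩)) a3v := by
        rw [← hP8, hP _ _, sum_univ3]
        rfl
      rw [hxr, har] at h'
      have h1 : (0:ℝ) ≤
          q ⟨0, Finset.mem_univ 0⟩ *
            PNk ⟨0, Finset.mem_univ 0⟩
              (restr (X := fun _ : Fin 3 => Bool) (erase_sub Finset.univ 0)
                (fun i => mkX true false (!(b ⟨1, h21⟩)) i.1))
              (restr (erase_sub Finset.univ 0) (fun i => mkA (b ⟨1, h21⟩) a3v i.1)) *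
            Plast ⟨0, Finset.mem_univ 0⟩
              (restr (X := fun _ : Fin 3 => Bool) (erase_sub Finset.univ 0)
                (fun i => mkX true false (!(b ⟨1, h21⟩)) i.1))
              (restr (erase_sub Finset.univ 0) (fun i => mkA (b ⟨1, h21⟩) a3v i.1))
              true () :=
        mul_nonneg (mul_nonneg (hq _) ((causal_isProbDist (hcaus _) _).1 _))
          ((hprob _ _ _ _).1 _)
      have h2 : (0:ℝ) ≤
          q ⟨1, Finset.mem_univ 1⟩ *
            PNk ⟨1, Finset.mem_univ 1⟩
              (restr (X := fun _ : Fin 3 => Bool) (erase_sub Finset.univ 1)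
                (fun i => mkX true false (!(b ⟨1, h21⟩)) i.1))
              (restr (erase_sub Finset.univ 1) (fun i => mkA (b ⟨1, h21⟩) a3v i.1)) *
            Plast ⟨1, Finset.mem_univ 1⟩
              (restr (X := fun _ : Fin 3 => Bool) (erase_sub Finset.univ 1)
                (fun i => mkX true false (!(b ⟨1, h21⟩)) i.1))
              (restr (erase_sub Finset.univ 1) (fun i => mkA (b ⟨1, h21⟩) a3v i.1))
              false (b ⟨1, h21⟩) :=
        mul_nonneg (mul_nonneg (hq _) ((causal_isProbDist (hcaus _) _).1 _))
          ((hprob _ _ _ _).1 _)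
      have h3 : (0:ℝ) ≤ q ⟨2, Finset.mem_univ 2⟩ *
          PNk ⟨2, Finset.mem_univ 2⟩ (fun i => mkX true false false i.1) b *
          Plast ⟨2, Finset.mem_univ 2⟩ (fun i => mkX true false false i.1) b
            (!(b ⟨1, h21⟩)) a3v :=
        mul_nonneg (mul_nonneg (hq _) ((causal_isProbDist (hcaus _) _).1 _))
          ((hprob _ _ _ _).1 _)
      linarith
    have hpd : IsProbDist (fun v : Bool =>
        Plast ⟨2, Finset.mem_univ 2⟩ (fun i => mkX true false false i.1) b
          (!(b ⟨1, h21⟩)) v) :=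
      hprob ⟨2, Finset.mem_univ 2⟩ (fun i => mkX true false false i.1) b (!(b ⟨1, h21⟩))
    have hL : Plast ⟨2, Finset.mem_univ 2⟩ (fun i => mkX true false false i.1) b
          (!(b ⟨1, h21⟩)) true +
        Plast ⟨2, Finset.mem_univ 2⟩ (fun i => mkX true false false i.1) b
          (!(b ⟨1, h21⟩)) false = 1 := by
      have := hpd.2
      rwa [Fintype.sum_bool] at this
    calc q ⟨2, Finset.mem_univ 2⟩ * PNk ⟨2, Finset.mem_univ 2⟩
          (fun i => mkX true false false i.1) b
        = q ⟨2, Finset.mem_univ 2⟩ * PNk ⟨2, Finset.mem_univ 2⟩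
            (fun i => mkX true false false i.1) b *
            (Plast ⟨2, Finset.mem_univ 2⟩ (fun i => mkX true false false i.1) b
              (!(b ⟨1, h21⟩)) true +
             Plast ⟨2, Finset.mem_univ 2⟩ (fun i => mkX true false false i.1) b
              (!(b ⟨1, h21⟩)) false) := by
          rw [hL, mul_one]
      _ = q ⟨2, Finset.mem_univ 2⟩ * PNk ⟨2, Finset.mem_univ 2⟩
            (fun i => mkX true false false i.1) b *
            Plast ⟨2, Finset.mem_univ 2⟩ (fun i => mkX true false false i.1) b
              (!(b ⟨1, h21⟩)) true +
          q ⟨2, Finset.mem_univ 2⟩ * PNk ⟨2, Finset.mem_univ 2⟩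
            (fun i => mkX true false false i.1) b *
            Plast ⟨2, Finset.mem_univ 2⟩ (fun i => mkX true false false i.1) b
              (!(b ⟨1, h21⟩)) false := by ring
      _ = 0 := by rw [hterm true, hterm false, add_zero]
  have hq2z : q ⟨2, Finset.mem_univ 2⟩ = 0 := by
    have hN := (causal_isProbDist (hcaus ⟨2, Finset.mem_univ 2⟩)
      (fun i => mkX true false false i.1)).2
    calc q ⟨2, Finset.mem_univ 2⟩
        = q ⟨2, Finset.mem_univ 2⟩ * ∑ b, PNk ⟨2, Finset.mem_univ 2⟩
            (fun i => mkX true false false i.1) b := by rw [hN, mul_one]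
      _ = ∑ b, q ⟨2, Finset.mem_univ 2⟩ * PNk ⟨2, Finset.mem_univ 2⟩
            (fun i => mkX true false false i.1) b := Finset.mul_sum _ _ _
      _ = 0 := Finset.sum_eq_zero fun b _ => key2 b
  -- Step C: q at party 0 equals 1, so `P8` would not depend on the input of party 0
  rw [sum_univ3] at hq1
  have hq0 : q ⟨0, Finset.mem_univ 0⟩ = 1 := by linarith
  have hMain : ∀ (x : (i : {j // j ∈ (Finset.univ : Finset (Fin 3))}) → Bool)
      (a : (i : {j // j ∈ (Finset.univ : Finset (Fin 3))}) → A8 i.1),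
      P8 x a = PNk ⟨0, Finset.mem_univ 0⟩
        (restr (X := fun _ : Fin 3 => Bool) (erase_sub Finset.univ 0) x)
        (restr (erase_sub Finset.univ 0) a) := by
    intro x a
    have hpd : IsProbDist (fun v : Unit => Plast ⟨0, Finset.mem_univ 0⟩
        (restr (X := fun _ : Fin 3 => Bool) (erase_sub Finset.univ 0) x)
        (restr (erase_sub Finset.univ 0) a) (x ⟨0, Finset.mem_univ 0⟩) v) :=
      hprob ⟨0, Finset.mem_univ 0⟩ _ _ _
    have hL0 : Plast ⟨0, Finset.mem_univ 0⟩
        (restr (X := fun _ : Fin 3 => Bool) (erase_sub Finset.univ 0) x)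
        (restr (erase_sub Finset.univ 0) a) (x ⟨0, Finset.mem_univ 0⟩)
        (a ⟨0, Finset.mem_univ 0⟩) = 1 := by
      have h2 := hpd.2
      rw [Fintype.sum_unique] at h2
      exact h2
    have h' : P8 x a =
        q ⟨0, Finset.mem_univ 0⟩ *
          PNk ⟨0, Finset.mem_univ 0⟩
            (restr (X := fun _ : Fin 3 => Bool) (erase_sub Finset.univ 0) x)
            (restr (erase_sub Finset.univ 0) a) *
          Plast ⟨0, Finset.mem_univ 0⟩
            (restr (X := fun _ : Fin 3 => Bool) (erase_sub Finset.univ 0) x)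
            (restr (erase_sub Finset.univ 0) a) (x ⟨0, Finset.mem_univ 0⟩)
            (a ⟨0, Finset.mem_univ 0⟩) +
        q ⟨1, Finset.mem_univ 1⟩ *
          PNk ⟨1, Finset.mem_univ 1⟩
            (restr (X := fun _ : Fin 3 => Bool) (erase_sub Finset.univ 1) x)
            (restr (erase_sub Finset.univ 1) a) *
          Plast ⟨1, Finset.mem_univ 1⟩
            (restr (X := fun _ : Fin 3 => Bool) (erase_sub Finset.univ 1) x)
            (restr (erase_sub Finset.univ 1) a) (x ⟨1, Finset.mem_univ 1⟩)
            (a ⟨1, Finset.mem_univ 1⟩) +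
        q ⟨2, Finset.mem_univ 2⟩ *
          PNk ⟨2, Finset.mem_univ 2⟩
            (restr (X := fun _ : Fin 3 => Bool) (erase_sub Finset.univ 2) x)
            (restr (erase_sub Finset.univ 2) a) *
          Plast ⟨2, Finset.mem_univ 2⟩
            (restr (X := fun _ : Fin 3 => Bool) (erase_sub Finset.univ 2) x)
            (restr (erase_sub Finset.univ 2) a) (x ⟨2, Finset.mem_univ 2⟩)
            (a ⟨2, Finset.mem_univ 2⟩) := by
      rw [hP x a, sum_univ3]
    rw [hq1z, hq2z, hq0, hL0] at h'
    rw [h']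
    ring
  have e1 : P8 (fun i => mkX false true false i.1) (fun i => mkA false true i.1) = 1 := rfl
  have e2 : P8 (fun i => mkX true true false i.1) (fun i => mkA false true i.1) = 0 := rfl
  have hre : restr (X := fun _ : Fin 3 => Bool) (erase_sub Finset.univ 0)
      (fun i : {j // j ∈ (Finset.univ : Finset (Fin 3))} => mkX false true false i.1) =
      restr (X := fun _ : Fin 3 => Bool) (erase_sub Finset.univ 0)
      (fun i : {j // j ∈ (Finset.univ : Finset (Fin 3))} => mkX true true false i.1) := by
    refine tuple_ext3 (B := fun _ => Bool) ?_ ?_ ?_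
    · intro hv hi; exact absurd rfl (Finset.mem_erase.mp hi).1
    · intro hv hi; rfl
    · intro hv hi; rfl
  have hcontr : (1:ℝ) = 0 := by
    rw [← e1, hMain, hre, ← hMain, e2]
  exact one_ne_zero hcontr
end
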